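/- (Sonine formula) For real p > 0, k > −1, and x ∈ ℝ, ∫_0^∞ J_k(xt) e^{−pt²} t^{k+1} dt = x^k e^{−x²/(4p)} / (2p)^{k+1}, where J_k is the Bessel function of the first kind of order k. -/

import Mathlib

open MeasureTheory

/-- The Bessel function of the first kind of order `α`, via its power series. -/
noncomputable def besselJ (α : ℝ) (z : ℂ) : ℂ :=
  ∑' m : ℕ, ((-1 : ℂ) ^ m / ((m.factorial : ℂ) * Complex.Gamma (m + α + 1))) *
    (z / 2) ^ (2 * (m : ℂ) + (α : ℂ))

open Real Set

section SonineAux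

lemma gauss_moment {p : ℝ} (hp : 0 < p) {s : ℝ} (hs : -1 < s) :
    ∫ t in Ioi (0:ℝ), t ^ s * Real.exp (-p * t ^ 2) =
      p ^ (-(s + 1) / 2) * (1 / 2) * Real.Gamma ((s + 1) / 2) := by
  rw [← integral_rpow_mul_exp_neg_mul_rpow two_pos hs hp]
  refine setIntegral_congr_fun measurableSet_Ioi fun t ht => ?_
  rw [Real.rpow_two]

lemma real_sonine {p k x : ℝ} (hp : 0 < p) (hk : -1 < k) (hx : 0 < x) :
    ∫ t in Ioi (0:ℝ),
      (∑' m : ℕ, ((-1:ℝ) ^ m / (m.factorial * Real.Gamma (m + k + 1))) *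
          (x * t / 2) ^ (2 * (m:ℝ) + k)) * Real.exp (-p * t ^ 2) * t ^ (k + 1) =
      x ^ k * Real.exp (-x ^ 2 / (4 * p)) / (2 * p) ^ (k + 1) := by
  set a : ℕ → ℝ := fun m => (-1:ℝ) ^ m / (m.factorial * Real.Gamma (m + k + 1)) with ha
  set C : ℝ := (x/2) ^ k * (p ^ (-(k+1)) * (1/2)) with hC
  set y : ℝ := x ^ 2 / (4 * p) with hy
  set F : ℕ → ℝ → ℝ := fun m t =>
    a m * (x * t / 2) ^ (2 * (m:ℝ) + k) * Real.exp (-p * t ^ 2) * t ^ (k + 1) with hF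
  have hx2 : (0:ℝ) < x / 2 := by linarith
  have hGpos : ∀ m : ℕ, 0 < Real.Gamma ((m:ℝ) + k + 1) := fun m =>
    Real.Gamma_pos_of_pos (by have h0 : (0:ℝ) ≤ (m:ℝ) := Nat.cast_nonneg m; linarith)
  have hsexp : ∀ m : ℕ, (-1:ℝ) < 2 * (m:ℝ) + 2 * k + 1 := fun m => by
    have : (0:ℝ) ≤ (m:ℝ) := Nat.cast_nonneg m
    linarith
  have hcongr : ∀ m : ℕ, EqOn
      (fun t : ℝ => (x/2) ^ (2 * (m:ℝ) + k) * (t ^ (2 * (m:ℝ) + 2*k + 1) * Real.exp (-p * t ^ 2)))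
      (fun t : ℝ => (x * t / 2) ^ (2 * (m:ℝ) + k) * Real.exp (-p * t ^ 2) * t ^ (k + 1))
      (Ioi 0) := by
    intro m t ht
    have ht0 : (0:ℝ) < t := ht
    simp only
    rw [show x * t / 2 = (x/2) * t by ring, Real.mul_rpow hx2.le ht0.le,
      show 2 * (m:ℝ) + 2*k + 1 = (2 * (m:ℝ) + k) + (k + 1) by ring, Real.rpow_add ht0]
    ring
  have hbase : ∀ m : ℕ, ∫ t in Ioi (0:ℝ),
      (x * t / 2) ^ (2 * (m:ℝ) + k) * Real.exp (-p * t ^ 2) * t ^ (k + 1) =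
      Real.Gamma ((m:ℝ) + k + 1) * (C * y ^ m) := by
    intro m
    rw [hC, hy, ← setIntegral_congr_fun measurableSet_Ioi (hcongr m), integral_const_mul,
      gauss_moment hp (hsexp m),
      show -(2 * (m:ℝ) + 2*k + 1 + 1) / 2 = -(m:ℝ) + -(k+1) by ring,
      show (2 * (m:ℝ) + 2*k + 1 + 1) / 2 = (m:ℝ) + k + 1 by ring]
    rw [show 2 * (m:ℝ) + k = ((2*m : ℕ):ℝ) + k by push_cast; ring,
      Real.rpow_add hx2 (↑(2*m)) k, Real.rpow_natCast, pow_mul,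
      Real.rpow_add hp, Real.rpow_neg hp.le (m:ℝ), Real.rpow_natCast,
      show ((x/2):ℝ)^2 = x^2/4 by ring,
      show x ^ 2 / (4 * p) = x^2/4 * p⁻¹ by ring, mul_pow, inv_pow]
    ring
  have hbint : ∀ m : ℕ, IntegrableOn
      (fun t : ℝ => (x * t / 2) ^ (2 * (m:ℝ) + k) * Real.exp (-p * t ^ 2) * t ^ (k + 1))
      (Ioi 0) := fun m =>
    MeasureTheory.IntegrableOn.congr_fun
      ((integrableOn_rpow_mul_exp_neg_mul_sq hp (hsexp m)).const_mul ((x/2) ^ (2 * (m:ℝ) + k)))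
      (hcongr m) measurableSet_Ioi
  have hFint : ∀ m : ℕ, IntegrableOn (F m) (Ioi 0) := by
    intro m
    refine MeasureTheory.IntegrableOn.congr_fun ((hbint m).const_mul (a m))
      (fun t ht => ?_) measurableSet_Ioi
    simp only [hF]; ring
  have hFval : ∀ m : ℕ, ∫ t in Ioi (0:ℝ), F m t = C * ((-y) ^ m / m.factorial) := by
    intro m
    have h1 : ∫ t in Ioi (0:ℝ), F m t = a m * ∫ t in Ioi (0:ℝ),
        (x * t / 2) ^ (2 * (m:ℝ) + k) * Real.exp (-p * t ^ 2) * t ^ (k + 1) := by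
      rw [← integral_const_mul]
      refine setIntegral_congr_fun measurableSet_Ioi fun t ht => ?_
      simp only [hF]; ring
    rw [h1, hbase m]
    simp only [ha]
    have hg := (hGpos m).ne'
    have hm : (m.factorial : ℝ) ≠ 0 := (Nat.cast_pos.mpr m.factorial_pos).ne'
    rw [neg_pow y]
    field_simp
  have hFnorm : ∀ m : ℕ, ∫ t in Ioi (0:ℝ), ‖F m t‖ = C * (y ^ m / m.factorial) := by
    intro m
    have h1 : ∫ t in Ioi (0:ℝ), ‖F m t‖ = |a m| * ∫ t in Ioi (0:ℝ),
        (x * t / 2) ^ (2 * (m:ℝ) + k) * Real.exp (-p * t ^ 2) * t ^ (k + 1) := by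
      rw [← integral_const_mul]
      refine setIntegral_congr_fun measurableSet_Ioi fun t ht => ?_
      have ht0 : (0:ℝ) < t := ht
      have hb : (0:ℝ) ≤ (x * t / 2) ^ (2 * (m:ℝ) + k) := Real.rpow_nonneg (by positivity) _
      have hT : (0:ℝ) ≤ t ^ (k + 1) := Real.rpow_nonneg ht0.le _
      simp only [hF, Real.norm_eq_abs, abs_mul]
      rw [abs_of_nonneg hb, abs_of_nonneg (Real.exp_pos _).le, abs_of_nonneg hT]
      ring
    rw [h1, hbase m]
    simp only [ha]
    have hg := (hGpos m).ne'
    have hm : (m.factorial : ℝ) ≠ 0 := (Nat.cast_pos.mpr m.factorial_pos).ne'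
    simp only [abs_div, abs_pow, abs_neg, abs_one, one_pow, abs_mul,
      Nat.abs_cast, abs_of_pos (hGpos m)]
    field_simp
  have hsum : Summable fun m : ℕ => ∫ t in Ioi (0:ℝ), ‖F m t‖ :=
    Summable.congr ((Real.summable_pow_div_factorial y).mul_left C)
      (fun m => (hFnorm m).symm)
  have hswap := integral_tsum_of_summable_integral_norm hFint hsum
  have hintegrand : EqOn
      (fun t : ℝ => (∑' m : ℕ, ((-1:ℝ) ^ m / (m.factorial * Real.Gamma (m + k + 1))) *
          (x * t / 2) ^ (2 * (m:ℝ) + k)) * Real.exp (-p * t ^ 2) * t ^ (k + 1))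
      (fun t : ℝ => ∑' m : ℕ, F m t) (Ioi 0) := by
    intro t ht
    simp only [hF, ha]
    rw [tsum_mul_right, tsum_mul_right]
  rw [setIntegral_congr_fun measurableSet_Ioi hintegrand, ← hswap]
  have hts : (∑' m : ℕ, ∫ t in Ioi (0:ℝ), F m t) = C * Real.exp (-y) := by
    rw [tsum_congr hFval, tsum_mul_left, Real.exp_eq_exp_ℝ, NormedSpace.exp_eq_tsum_div]
  rw [hts, hC, hy, neg_div]
  rw [show x ^ k = (x/2) ^ k * (2:ℝ) ^ k by
      rw [← Real.mul_rpow (by positivity) (by norm_num), div_mul_cancel₀ x (two_ne_zero)],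
    show ((2:ℝ)*p) ^ (k+1) = (2:ℝ) ^ (k+1) * p ^ (k+1) from
      Real.mul_rpow (by norm_num) hp.le,
    Real.rpow_add (two_pos) k 1, Real.rpow_one, Real.rpow_neg hp.le]
  have h2k : (0:ℝ) < (2:ℝ) ^ k := Real.rpow_pos_of_pos two_pos k
  have hpk : (0:ℝ) < p ^ (k+1) := Real.rpow_pos_of_pos hp _
  field_simp

lemma besselJ_ofReal_pos (k : ℝ) {r : ℝ} (hr : 0 < r) :
    besselJ k (r : ℂ) = ((∑' m : ℕ, ((-1:ℝ) ^ m / (m.factorial * Real.Gamma (m + k + 1))) *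
      (r / 2) ^ (2 * (m:ℝ) + k) : ℝ) : ℂ) := by
  rw [besselJ, Complex.ofReal_tsum]
  refine tsum_congr fun m => ?_
  rw [show ((r:ℂ))/2 = ((r/2 : ℝ):ℂ) by push_cast; ring,
    show 2*(m:ℂ)+(k:ℂ) = (((2*(m:ℝ)+k) : ℝ):ℂ) by push_cast; ring,
    ← Complex.ofReal_cpow (by positivity) (2*(m:ℝ)+k),
    show (m:ℂ)+(k:ℂ)+1 = (((m:ℝ)+k+1 : ℝ):ℂ) by push_cast; ring,
    Complex.Gamma_ofReal]
  push_cast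
  ring

lemma sonine_pos (p k : ℝ) (hp : 0 < p) (hk : -1 < k) {x : ℝ} (hx : 0 < x) :
    ∫ t in Set.Ioi (0:ℝ),
        besselJ k ((x : ℂ) * t) * Complex.exp (-(p : ℂ) * t ^ 2) * (t : ℂ) ^ ((k : ℂ) + 1) =
      (x : ℂ) ^ (k : ℂ) * Complex.exp (-(x : ℂ) ^ 2 / (4 * p)) / (2 * (p : ℂ)) ^ ((k : ℂ) + 1) := by
  have hstep : EqOn
      (fun t : ℝ => besselJ k ((x:ℂ)*t) * Complex.exp (-(p:ℂ)*t^2) * (t:ℂ)^((k:ℂ)+1))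
      (fun t : ℝ => (((∑' m : ℕ, ((-1:ℝ) ^ m / (m.factorial * Real.Gamma (m + k + 1))) *
          (x * t / 2) ^ (2 * (m:ℝ) + k)) * Real.exp (-p * t ^ 2) * t ^ (k + 1) : ℝ) : ℂ))
      (Ioi 0) := by
    intro t ht
    have ht0 : (0:ℝ) < t := ht
    simp only
    rw [show (x:ℂ)*t = ((x*t : ℝ):ℂ) by push_cast; ring,
      besselJ_ofReal_pos k (mul_pos hx ht0),
      show -(p:ℂ)*(t:ℂ)^2 = ((-p*t^2 : ℝ):ℂ) by push_cast; ring,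
      ← Complex.ofReal_exp,
      show (k:ℂ)+1 = ((k+1:ℝ):ℂ) by push_cast; ring,
      ← Complex.ofReal_cpow ht0.le]
    push_cast
    ring
  rw [setIntegral_congr_fun measurableSet_Ioi hstep,
    show (∫ t in Ioi (0:ℝ), (((∑' m : ℕ, ((-1:ℝ) ^ m / (m.factorial * Real.Gamma (m + k + 1))) *
          (x * t / 2) ^ (2 * (m:ℝ) + k)) * Real.exp (-p * t ^ 2) * t ^ (k + 1) : ℝ) : ℂ)) =
        ((∫ t in Ioi (0:ℝ), (∑' m : ℕ, ((-1:ℝ) ^ m / (m.factorial * Real.Gamma (m + k + 1))) *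
          (x * t / 2) ^ (2 * (m:ℝ) + k)) * Real.exp (-p * t ^ 2) * t ^ (k + 1) : ℝ) : ℂ)
      from integral_ofReal,
    real_sonine hp hk hx]
  rw [← Complex.ofReal_cpow hx.le k,
    show -(x:ℂ)^2/(4*(p:ℂ)) = ((-x^2/(4*p) : ℝ):ℂ) by push_cast; ring,
    ← Complex.ofReal_exp,
    show (2*(p:ℂ)) = ((2*p : ℝ):ℂ) by push_cast; ring,
    show (k:ℂ)+1 = ((k+1:ℝ):ℂ) by push_cast; ring,
    ← Complex.ofReal_cpow (by positivity) (k+1)]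
  norm_cast

lemma ofReal_cpow_of_neg {a : ℝ} (ha : a < 0) (w : ℂ) :
    (a:ℂ) ^ w = ((-a : ℝ):ℂ) ^ w * Complex.exp (Real.pi * Complex.I * w) := by
  have h0 : (a:ℂ) ≠ 0 := by exact_mod_cast ha.ne
  have h1 : ((-a:ℝ):ℂ) ≠ 0 := by
    simp only [ne_eq, Complex.ofReal_eq_zero]
    linarith
  rw [Complex.cpow_def_of_ne_zero h0, Complex.cpow_def_of_ne_zero h1,
    ← Complex.ofReal_log (by linarith : (0:ℝ) ≤ -a)]
  have hlog : Complex.log (a:ℂ) = ((Real.log (-a) : ℝ) : ℂ) + Real.pi * Complex.I := by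
    apply Complex.ext
    · simp [Complex.log_re, Complex.norm_real, Real.norm_eq_abs, abs_of_neg ha]
    · simp [Complex.log_im, Complex.arg_ofReal_of_neg ha]
  rw [hlog, add_mul, Complex.exp_add]

lemma besselJ_ofReal_neg (k : ℝ) {a : ℝ} (ha : a < 0) :
    besselJ k (a : ℂ) = Complex.exp (Real.pi * Complex.I * k) * besselJ k (((-a : ℝ)) : ℂ) := by
  rw [besselJ, besselJ, ← tsum_mul_left]
  refine tsum_congr fun m => ?_
  have h2 : ((a:ℂ))/2 = ((a/2 : ℝ):ℂ) := by push_cast; ring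
  have h3 : ((-(a/2):ℝ):ℂ) = ((-a:ℝ):ℂ)/2 := by push_cast; ring
  have h4 : Complex.exp ((Real.pi:ℂ)*Complex.I*(2*(m:ℂ)+k)) =
      Complex.exp ((Real.pi:ℂ)*Complex.I*k) := by
    rw [show (Real.pi:ℂ)*Complex.I*(2*(m:ℂ)+k) =
        (m:ℂ)*(2*Real.pi*Complex.I) + Real.pi*Complex.I*k by ring,
      Complex.exp_add, Complex.exp_nat_mul_two_pi_mul_I, one_mul]
  rw [h2, ofReal_cpow_of_neg (by linarith) (2*(m:ℂ)+k), h3, h4]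
  ring

lemma besselJ_zero_of_ne (k : ℝ) (hk : -1 < k) (hk0 : k ≠ 0) : besselJ k 0 = 0 := by
  rw [besselJ]
  convert tsum_zero with m
  rw [zero_div, Complex.zero_cpow, mul_zero]
  intro h
  have h' : 2*(m:ℝ) + k = 0 := by exact_mod_cast h
  rcases m with _ | m
  · simp at h'; exact hk0 h'
  · have : (0:ℝ) ≤ (m:ℝ) := Nat.cast_nonneg m
    push_cast at h'
    linarith

lemma besselJ_zero_zero : besselJ 0 0 = 1 := by
  rw [besselJ]
  rw [tsum_eq_single 0]
  · norm_num [Complex.Gamma_one]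
  · intro m hm
    rw [zero_div, Complex.zero_cpow, mul_zero]
    intro h
    have h' : 2*(m:ℝ) + (0:ℝ) = 0 := by exact_mod_cast h
    have hm' : (1:ℝ) ≤ (m:ℝ) := by exact_mod_cast Nat.one_le_iff_ne_zero.mpr hm
    linarith

end SonineAux

/-- Sonine's formula: `∫₀^∞ J_k(xt) e^{-pt²} t^{k+1} dt = x^k e^{-x²/(4p)}/(2p)^{k+1}`. -/
theorem sonine_formula (p k : ℝ) (hp : 0 < p) (hk : -1 < k) (x : ℝ) :
    ∫ t in Set.Ioi (0:ℝ),
        besselJ k ((x : ℂ) * t) * Complex.exp (-(p : ℂ) * t ^ 2) * (t : ℂ) ^ ((k : ℂ) + 1) =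
      (x : ℂ) ^ (k : ℂ) * Complex.exp (-(x : ℂ) ^ 2 / (4 * p)) / (2 * (p : ℂ)) ^ ((k : ℂ) + 1) := by
  rcases lt_trichotomy x 0 with hx | hx | hx
  · -- x < 0
    have hx' : 0 < -x := by linarith
    have h1 : EqOn
        (fun t : ℝ => besselJ k ((x:ℂ)*t) * Complex.exp (-(p:ℂ)*t^2) * (t:ℂ)^((k:ℂ)+1))
        (fun t : ℝ => Complex.exp (Real.pi*Complex.I*k) *
          (besselJ k (((-x : ℝ):ℂ)*t) * Complex.exp (-(p:ℂ)*t^2) * (t:ℂ)^((k:ℂ)+1))) (Ioi 0) := by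
      intro t ht
      have ht0 : (0:ℝ) < t := ht
      simp only
      rw [show (x:ℂ)*t = ((x*t:ℝ):ℂ) by push_cast; ring,
        besselJ_ofReal_neg k (mul_neg_of_neg_of_pos hx ht0),
        show ((-(x*t):ℝ):ℂ) = ((-x:ℝ):ℂ)*t by push_cast; ring]
      ring
    rw [setIntegral_congr_fun measurableSet_Ioi h1, integral_const_mul,
      sonine_pos p k hp hk hx', ofReal_cpow_of_neg hx ((k:ℝ):ℂ),
      show ((x:ℝ):ℂ)^2 = (((-x):ℝ):ℂ)^2 by push_cast; ring]
    ring
  · -- x = 0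
    subst hx
    by_cases hk0 : k = 0
    · subst hk0
      have h1 : EqOn
          (fun t : ℝ => besselJ 0 (((0:ℝ):ℂ)*t) * Complex.exp (-(p:ℂ)*t^2) *
            (t:ℂ)^(((0:ℝ):ℂ)+1))
          (fun t : ℝ => ((Real.exp (-p*t^2) * t : ℝ) : ℂ)) (Ioi 0) := by
        intro t ht
        simp only
        rw [show ((0:ℝ):ℂ)*t = 0 by push_cast; ring, besselJ_zero_zero, one_mul,
          show (((0:ℝ):ℂ))+1 = 1 by norm_num, Complex.cpow_one]
        push_cast
        ring
      rw [setIntegral_congr_fun measurableSet_Ioi h1,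
        show (∫ t in Ioi (0:ℝ), ((Real.exp (-p*t^2) * t : ℝ):ℂ)) =
          ((∫ t in Ioi (0:ℝ), Real.exp (-p*t^2) * t : ℝ) : ℂ) from integral_ofReal]
      have h2 : ∫ t in Ioi (0:ℝ), Real.exp (-p*t^2) * t = 1/(2*p) := by
        have hc : EqOn (fun t:ℝ => Real.exp (-p*t^2) * t)
            (fun t:ℝ => t ^ (1:ℝ) * Real.exp (-p*t^2)) (Ioi 0) := fun t ht => by
          simp only
          rw [Real.rpow_one]; ring
        rw [setIntegral_congr_fun measurableSet_Ioi hc,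
          gauss_moment hp (by norm_num : (-1:ℝ) < 1),
          show (-((1:ℝ)+1)/2 : ℝ) = -1 by norm_num,
          show (((1:ℝ)+1)/2 : ℝ) = 1 by norm_num,
          Real.rpow_neg_one, Real.Gamma_one]
        ring
      rw [h2]
      norm_num [Complex.cpow_one]
    · have h1 : EqOn
          (fun t : ℝ => besselJ k (((0:ℝ):ℂ)*t) * Complex.exp (-(p:ℂ)*t^2) * (t:ℂ)^((k:ℂ)+1))
          (fun _ : ℝ => (0:ℂ)) (Ioi 0) := by
        intro t ht
        simp only
        rw [show ((0:ℝ):ℂ)*t = 0 by push_cast; ring, besselJ_zero_of_ne k hk hk0,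
          zero_mul, zero_mul]
      rw [setIntegral_congr_fun measurableSet_Ioi h1, integral_zero,
        Complex.ofReal_zero, Complex.zero_cpow (by exact_mod_cast hk0 : ((k:ℝ):ℂ) ≠ 0),
        zero_mul, zero_div]
  · exact sonine_pos p k hp hk hx
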